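/- Let (Ω,ℱ,ℙ) be a probability space with filtration (ℱ_k)_{k≥0}, let (z_k)_{k≥0} be an adapted sequence of ℝ^d-valued random variables with z_0 almost surely equal to a fixed vector, let b > 0 with ‖z_0‖ ≤ b, let ρ ∈ (0,1), and suppose the conditional contraction hypothesis holds. Define τ_b := min{j ≥ 0 : ‖z_j‖ > b} (= ∞ if no such j). If ℙ(τ_b = ∞) > 0, then for every k ≥ 1, E[‖z_k‖² | τ_b = ∞] ≤ ρ^k·‖z_0‖² / (1 − ℙ(τ_b < ∞)). -/

import Mathlib

open MeasureTheory

/-- Under the conditional contraction hypothesis, conditioned on the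
stability event `{τ_b = ∞} = {∀ j, ‖z_j‖ ≤ b}` (assumed to have positive probability),
the squared error decays exponentially:
`E[‖z_k‖² | τ_b = ∞] ≤ ρ^k‖z_0‖² / (1 − ℙ(τ_b < ∞))` for all `k ≥ 1`
(here `E[X | A] := E[X·1_A]/ℙ(A)` and `{τ_b < ∞} = {∃ j, ‖z_j‖ > b}`). -/
theorem conditional_error_decay (d : ℕ) (Ω : Type) [m0 : MeasurableSpace Ω]
    (P : Measure Ω) [IsProbabilityMeasure P] (ℱ : Filtration ℕ m0)
    (z : ℕ → Ω → EuclideanSpace ℝ (Fin d)) (hadapt : Adapted ℱ z)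
    (z0 : EuclideanSpace ℝ (Fin d)) (hz0 : ∀ᵐ ω ∂P, z 0 ω = z0)
    (hint : ∀ k, Integrable (fun ω => ‖z k ω‖ ^ 2) P)
    (b : ℝ) (hb : 0 < b) (hz0b : ‖z0‖ ≤ b)
    (ρ : ℝ) (hρ : ρ ∈ Set.Ioo (0 : ℝ) 1)
    (hcontr : ∀ k : ℕ, ∀ᵐ ω ∂P, ‖z k ω‖ ≤ b →
      (P[fun ω' => ‖z (k + 1) ω'‖ ^ 2 | ℱ k]) ω ≤ ρ * ‖z k ω‖ ^ 2)
    (hpos : 0 < P {ω | ∀ j : ℕ, ‖z j ω‖ ≤ b}) :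
    ∀ k : ℕ, 1 ≤ k →
      (∫ ω in {ω | ∀ j : ℕ, ‖z j ω‖ ≤ b}, ‖z k ω‖ ^ 2 ∂P)
          / (P {ω | ∀ j : ℕ, ‖z j ω‖ ≤ b}).toReal
        ≤ ρ ^ k * ‖z0‖ ^ 2 / (1 - (P {ω | ∃ j : ℕ, b < ‖z j ω‖}).toReal) := by
  set A : Set Ω := {ω | ∀ j : ℕ, ‖z j ω‖ ≤ b} with hA
  -- measurability of the level sets
  have hlev : ∀ j : ℕ, MeasurableSet[ℱ j] {ω | ‖z j ω‖ ≤ b} := by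
    intro j
    have hm : Measurable[ℱ j] (fun ω => ‖z j ω‖) := @Measurable.comp _ _ _ (ℱ j) _ _ _ _ continuous_norm.measurable (hadapt j)
    exact hm measurableSet_Iic
  have hlev0 : ∀ j : ℕ, MeasurableSet {ω | ‖z j ω‖ ≤ b} := fun j =>
    (ℱ.le j) _ (hlev j)
  have hAmeas : MeasurableSet A := by
    have : A = ⋂ j : ℕ, {ω | ‖z j ω‖ ≤ b} := by
      ext ω; simp [hA, Set.mem_iInter]
    rw [this]
    exact MeasurableSet.iInter fun j => hlev0 j
  -- the "no escape before time k" sets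
  set B : ℕ → Set Ω := fun k => {ω | ∀ j < k, ‖z j ω‖ ≤ b} with hB
  have hBmeas : ∀ k : ℕ, MeasurableSet[ℱ k] (B (k + 1)) := by
    intro k
    have : B (k + 1) = ⋂ j : ℕ, ⋂ _ : j < k + 1, {ω | ‖z j ω‖ ≤ b} := by
      ext ω; simp [hB, Set.mem_iInter]
    rw [this]
    refine MeasurableSet.iInter fun j => MeasurableSet.iInter fun hj => ?_
    exact ℱ.mono (Nat.lt_succ_iff.mp hj) _ (hlev j)
  have hBsub : ∀ k : ℕ, B (k + 1) ⊆ B k := by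
    intro k ω hω j hj
    exact hω j (hj.trans (Nat.lt_succ_self k))
  -- main induction
  have key : ∀ k : ℕ, (∫ ω in B k, ‖z k ω‖ ^ 2 ∂P) ≤ ρ ^ k * ‖z0‖ ^ 2 := by
    intro k
    induction k with
    | zero =>
      have hB0 : B 0 = Set.univ := by
        ext ω; simp [hB]
      rw [hB0, Measure.restrict_univ]
      have : (∫ ω, ‖z 0 ω‖ ^ 2 ∂P) = ‖z0‖ ^ 2 := by
        rw [integral_congr_ae (g := fun _ => ‖z0‖ ^ 2) (by filter_upwards [hz0] with ω h; rw [h])]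
        simp
      rw [this]; simp
    | succ k ih =>
      have hmeas0 : MeasurableSet (B (k + 1)) := (ℱ.le k) _ (hBmeas k)
      have step1 : (∫ ω in B (k + 1), ‖z (k + 1) ω‖ ^ 2 ∂P)
          = ∫ ω in B (k + 1), (P[fun ω' => ‖z (k + 1) ω'‖ ^ 2 | ℱ k]) ω ∂P :=
        (setIntegral_condExp (ℱ.le k) (hint (k + 1)) (hBmeas k)).symm
      have step2 : (∫ ω in B (k + 1), (P[fun ω' => ‖z (k + 1) ω'‖ ^ 2 | ℱ k]) ω ∂P)
          ≤ ∫ ω in B (k + 1), ρ * ‖z k ω‖ ^ 2 ∂P := by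
        refine setIntegral_mono_ae_restrict
          integrable_condExp.integrableOn ((hint k).const_mul ρ).integrableOn ?_
        filter_upwards [ae_restrict_mem hmeas0, ae_restrict_of_ae (hcontr k)] with ω hmem h
        exact h (hmem k (Nat.lt_succ_self k))
      have step3 : (∫ ω in B (k + 1), ρ * ‖z k ω‖ ^ 2 ∂P)
          ≤ ρ * ∫ ω in B k, ‖z k ω‖ ^ 2 ∂P := by
        rw [integral_const_mul]
        refine mul_le_mul_of_nonneg_left ?_ hρ.1.le
        refine setIntegral_mono_set (hint k).integrableOn
          (ae_of_all _ fun ω => sq_nonneg _) (HasSubset.Subset.eventuallyLE (hBsub k))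
      calc (∫ ω in B (k + 1), ‖z (k + 1) ω‖ ^ 2 ∂P)
          ≤ ρ * ∫ ω in B k, ‖z k ω‖ ^ 2 ∂P := by
            rw [step1]; exact step2.trans step3
        _ ≤ ρ * (ρ ^ k * ‖z0‖ ^ 2) := mul_le_mul_of_nonneg_left ih hρ.1.le
        _ = ρ ^ (k + 1) * ‖z0‖ ^ 2 := by ring
  -- the complement identity
  have hcompl : {ω | ∃ j : ℕ, b < ‖z j ω‖} = Aᶜ := by
    ext ω; simp [hA, not_forall, not_le]
  have hPA : (P A).toReal ≤ 1 := by
    have := prob_le_one (μ := P) (s := A)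
    exact ENNReal.toReal_le_of_le_ofReal zero_le_one (by simpa using this)
  have hdenom : 1 - (P {ω | ∃ j : ℕ, b < ‖z j ω‖}).toReal = (P A).toReal := by
    rw [hcompl, prob_compl_eq_one_sub hAmeas, ENNReal.toReal_sub_of_le
      (prob_le_one) (by simp)]
    simp
  have hPApos : 0 < (P A).toReal :=
    ENNReal.toReal_pos hpos.ne' (measure_ne_top _ _)
  intro k hk
  rw [hdenom]
  have hsubA : ∀ k : ℕ, A ⊆ B k := fun k ω hω j _ => hω j
  have hineq : (∫ ω in A, ‖z k ω‖ ^ 2 ∂P) ≤ ρ ^ k * ‖z0‖ ^ 2 := by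
    refine le_trans ?_ (key k)
    exact setIntegral_mono_set (hint k).integrableOn
      (ae_of_all _ fun ω => sq_nonneg _) (HasSubset.Subset.eventuallyLE (hsubA k))
  exact div_le_div_of_nonneg_right hineq hPApos.le |>.trans_eq rfl
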